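/- Let (V,𝒳) be a corepresentation of a partial Hopf algebra 𝒜 with antipode S, and set Z(k,l;m,n) := (S ⊗ id)(X(n,m;l,k)). Then Z(k,l;m,n) ∈ A(k,l;m,n) ⊗ Hom(V(l,k),V(n,m)), and the following hold: X(k,l;m,n)·Z(l,k';n,m') = 0 whenever m' ≠ m; Σ_n X(k,l;m,n)·Z(l,k';n,m) = δ_{k,k'} 1(k,m) ⊗ id_{V(k,l)}; Z(n,m;l,k)·X(m,n';k,l') = 0 whenever n ≠ n'; and Σ_m Z(n,m;l,k)·X(m,n;k,l') = δ_{l,l'} 1(n,l) ⊗ id_{V(k,l)}. In particular, the total multiplier Z := (S ⊗ id)(X) satisfies XZ = Σ_k λ_k ⊗ λ^V_k and ZX = Σ_l ρ_l ⊗ ρ^V_l, where λ^V_k, ρ^V_l are the projections of V onto ⊕_q V(k,q) and ⊕_p V(p,l), and Z is a generalized inverse of X: XZX = X and ZXZ = Z. -/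

import Mathlib

open scoped TensorProduct Classical ComplexOrder
open TensorProduct

noncomputable section

/-- The homogeneous component `A(k,l;m,n)` of a partial algebra, determined by
the family of local units `E`: it consists of those `a` with `E k m * a = a = a * E l n`. -/
def gradeComp {I C : Type} [NonUnitalRing C] [Module ℂ C]
    [SMulCommClass ℂ C C] [IsScalarTower ℂ C C]
    (E : I → I → C) (k l m n : I) : Submodule ℂ C where
  carrier := {a | E k m * a = a ∧ a * E l n = a}
  add_mem' := fun ha hb => ⟨by rw [mul_add, ha.1, hb.1], by rw [add_mul, ha.2, hb.2]⟩
  zero_mem' := ⟨mul_zero _, zero_mul _⟩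
  smul_mem' := fun c a ha => ⟨by rw [mul_smul_comm, ha.1], by rw [smul_mul_assoc, ha.2]⟩

/-- An `I`-partial bialgebra, presented through its total algebra `C`:
a collection of subspaces `A(k,l;m,n)` (cut out by the local units `E k m = 1(k,m)`)
which decompose `C`, together with comultiplication maps `Δ r s`, and a counit `ε`,
subject to the axioms of a partial bialgebra. -/
structure PartialBialgebra (I C : Type) [NonUnitalRing C] [Module ℂ C]
    [SMulCommClass ℂ C C] [IsScalarTower ℂ C C] : Type 1 where
  /-- the local units `1(k,m)` -/
  E : I → I → C
  E_idem : ∀ k m, E k m * E k m = E k m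
  E_orth : ∀ k l m n, (k, m) ≠ (l, n) → E k m * E l n = 0
  /-- the total algebra is the direct sum of its homogeneous components -/
  grading : DirectSum.IsInternal fun x : I × I × I × I =>
    gradeComp E x.1 x.2.1 x.2.2.1 x.2.2.2
  /-- the comultiplication maps `Δ_{rs}` -/
  Δ : I → I → C →ₗ[ℂ] C ⊗[ℂ] C
  /-- the counit -/
  ε : C →ₗ[ℂ] ℂ
  Δ_mem : ∀ k l m n r s, ∀ a ∈ gradeComp E k l m n,
    Δ r s a ∈ LinearMap.range (TensorProduct.map (gradeComp E k l r s).subtype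
      (gradeComp E r s m n).subtype)
  coassoc : ∀ r s t u (a : C),
    (TensorProduct.assoc ℂ C C C) ((LinearMap.rTensor C (Δ r s)) (Δ t u a))
      = (LinearMap.lTensor C (Δ t u)) (Δ r s a)
  counit_l : ∀ k l m n, ∀ a ∈ gradeComp E k l m n,
    (TensorProduct.lid ℂ C) ((LinearMap.rTensor C ε) (Δ k l a)) = a
  counit_r : ∀ k l m n, ∀ a ∈ gradeComp E k l m n,
    (TensorProduct.rid ℂ C) ((LinearMap.lTensor C ε) (Δ m n a)) = a
  ε_supp : ∀ k l m n, (k, l) ≠ (m, n) → ∀ a ∈ gradeComp E k l m n, ε a = 0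
  ε_mul : ∀ k l p m n q, ∀ a ∈ gradeComp E k l m n, ∀ b ∈ gradeComp E l p n q,
    ε (a * b) = ε a * ε b
  ε_E : ∀ k, ε (E k k) = 1
  Δ_E_diag : ∀ k m l, Δ l l (E k m) = E k l ⊗ₜ[ℂ] E l m
  Δ_E_ne : ∀ k m l l', l ≠ l' → Δ l l' (E k m) = 0
  Δ_rcf_row : ∀ (a : C) (r : I), {s | Δ r s a ≠ 0}.Finite
  Δ_rcf_col : ∀ (a : C) (s : I), {r | Δ r s a ≠ 0}.Finite
  Δ_mul : ∀ r s (a b : C), Δ r s (a * b) = ∑ᶠ t, Δ r t a * Δ t s b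

namespace PartialBialgebra

variable {I C : Type} [NonUnitalRing C] [Module ℂ C]
  [SMulCommClass ℂ C C] [IsScalarTower ℂ C C] (B : PartialBialgebra I C)

/-- the homogeneous component `A(k,l;m,n)` of the partial bialgebra -/
def comp (k l m n : I) : Submodule ℂ C := gradeComp B.E k l m n

/-- `λ_p a`, the product of the multiplier `λ_p = Σ_l 1(p,l)` with `a` -/
def lamMul (p : I) (a : C) : C := ∑ᶠ l, B.E p l * a

/-- `a λ_p` -/
def mulLam (a : C) (p : I) : C := ∑ᶠ l, a * B.E p l

/-- `ρ_p a` -/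
def rhoMul (p : I) (a : C) : C := ∑ᶠ k, B.E k p * a

/-- `a ρ_p` -/
def mulRho (a : C) (p : I) : C := ∑ᶠ k, a * B.E k p

/-- `S` is an antipode for the partial bialgebra `B`: it maps each component
`A(k,l;m,n)` to `A(n,m;l,k)` and satisfies `a₍₁₎S(a₍₂₎) = Π^L(a)` and
`S(a₍₁₎)a₍₂₎ = Π^R(a)`, written out in components (cutting the multiplier
`Π^L(a) = Σ_p ε(λ_p a) λ_p` at the column `(r,r)`, resp. `Π^R(a) = Σ_p ε(a ρ_p) ρ_p`
at the row `(s,s)`). -/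
def IsAntipode (S : C →ₗ[ℂ] C) : Prop :=
  (∀ k l m n, ∀ a ∈ B.comp k l m n, S a ∈ B.comp n m l k) ∧
  (∀ (a : C) (r : I),
    ∑ᶠ s, (LinearMap.mul' ℂ C) ((LinearMap.lTensor C S) (B.Δ r s a))
      = ∑ᶠ p, B.ε (B.lamMul p a) • B.E p r) ∧
  (∀ (a : C) (s : I),
    ∑ᶠ r, (LinearMap.mul' ℂ C) ((LinearMap.rTensor C S) (B.Δ r s a))
      = ∑ᶠ p, B.ε (B.mulRho a p) • B.E s p)

/-- a partial Hopf algebra is a partial bialgebra admitting an antipode -/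
def IsHopf : Prop := ∃ S : C →ₗ[ℂ] C, B.IsAntipode S

/-- a left invariant integral on a partial bialgebra -/
def IsLeftIntegral (φ : C →ₗ[ℂ] ℂ) : Prop :=
  (∀ k l m n, ¬(k = l ∧ m = n) → ∀ a ∈ B.comp k l m n, φ a = 0) ∧
  (∀ k, φ (B.E k k) = 1) ∧
  (∀ k p m l, ∀ a ∈ B.comp k p m m,
    (TensorProduct.rid ℂ C) ((LinearMap.lTensor C φ) (B.Δ l l a))
      = if k = p then φ a • B.E k l else 0)

/-- a right invariant integral on a partial bialgebra -/
def IsRightIntegral (φ : C →ₗ[ℂ] ℂ) : Prop :=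
  (∀ k l m n, ¬(k = l ∧ m = n) → ∀ a ∈ B.comp k l m n, φ a = 0) ∧
  (∀ k, φ (B.E k k) = 1) ∧
  (∀ k m p l, ∀ a ∈ B.comp k k m p,
    (TensorProduct.lid ℂ C) ((LinearMap.rTensor C φ) (B.Δ l l a))
      = if m = p then φ a • B.E l m else 0)

/-- an invariant integral is a left and right invariant integral -/
def IsIntegral (φ : C →ₗ[ℂ] ℂ) : Prop := B.IsLeftIntegral φ ∧ B.IsRightIntegral φ

end PartialBialgebra

/-- the componentwise star operation on `C ⊗[ℂ] C`, `(a ⊗ b)* = a* ⊗ b*` -/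
def starTmul {C : Type} [NonUnitalRing C] [Module ℂ C]
    [SMulCommClass ℂ C C] [IsScalarTower ℂ C C] [StarRing C] [StarModule ℂ C] :
    C ⊗[ℂ] C →+ C ⊗[ℂ] C :=
  TensorProduct.liftAddHom
    { toFun := fun a => AddMonoidHom.mk' (fun b => star a ⊗ₜ[ℂ] star b)
        (fun b b' => by simp [star_add, TensorProduct.tmul_add])
      map_zero' := by ext b; simp
      map_add' := fun a a' => by ext b; simp [star_add, TensorProduct.add_tmul] }
    (fun c a b => by
      simp only [AddMonoidHom.mk'_apply, AddMonoidHom.coe_mk, ZeroHom.coe_mk, star_smul]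
      rw [TensorProduct.smul_tmul])

namespace PartialBialgebra

variable {I C : Type} [NonUnitalRing C] [Module ℂ C]
  [SMulCommClass ℂ C C] [IsScalarTower ℂ C C] (B : PartialBialgebra I C)

/-- the conditions making a partial bialgebra a partial *-bialgebra:
the total algebra carries an (antilinear, antimultiplicative) involution
(recorded by the `StarRing` and `StarModule` instances), the local units are
self-adjoint, and `Δ_{rs}(a)* = Δ_{sr}(a*)`. -/
def IsStarBialgebra [StarRing C] [StarModule ℂ C] : Prop :=
  (∀ k m, star (B.E k m) = B.E k m) ∧
  (∀ r s (a : C), B.Δ s r (star a) = starTmul (B.Δ r s a))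

/-- the data of a partial compact quantum group: a partial Hopf `*`-algebra with a
positive invariant integral `φ`. -/
def IsCQG [StarRing C] [StarModule ℂ C] (φ : C →ₗ[ℂ] ℂ) : Prop :=
  B.IsStarBialgebra ∧ B.IsHopf ∧ B.IsIntegral φ ∧ ∀ a : C, 0 ≤ φ (star a * a)

end PartialBialgebra

/-- row-and-column finiteness of an `I²`-graded family of (finite-dimensional) spaces -/
def Rcfd {I : Type} (V : I → I → Type) [∀ k l, Zero (V k l)] : Prop :=
  (∀ k, {l | ∃ v : V k l, v ≠ 0}.Finite) ∧ (∀ l, {k | ∃ v : V k l, v ≠ 0}.Finite)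

/-- conjugation of a hom by post- and pre-composition, as a linear map -/
def conjHom {V0 V1 V2 V3 : Type}
    [AddCommGroup V0] [Module ℂ V0] [AddCommGroup V1] [Module ℂ V1]
    [AddCommGroup V2] [Module ℂ V2] [AddCommGroup V3] [Module ℂ V3]
    (f : V2 →ₗ[ℂ] V3) (g : V0 →ₗ[ℂ] V1) : (V1 →ₗ[ℂ] V2) →ₗ[ℂ] (V0 →ₗ[ℂ] V3) where
  toFun h := f ∘ₗ h ∘ₗ g
  map_add' h h' := by ext v; simp
  map_smul' c h := by ext v; simp

/-- the product `x₁₃ y₂₃` of two `C ⊗ Hom` legs, keeping the two algebra legs apart -/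
def corepProd {C : Type} [AddCommGroup C] [Module ℂ C] {V1 V2 V3 : Type}
    [AddCommGroup V1] [Module ℂ V1] [AddCommGroup V2] [Module ℂ V2]
    [AddCommGroup V3] [Module ℂ V3]
    (x : C ⊗[ℂ] (V2 →ₗ[ℂ] V3)) (y : C ⊗[ℂ] (V1 →ₗ[ℂ] V2)) :
    (C ⊗[ℂ] C) ⊗[ℂ] (V1 →ₗ[ℂ] V3) :=
  (TensorProduct.map LinearMap.id (TensorProduct.lift (LinearMap.llcomp ℂ V1 V2 V3)))
    ((TensorProduct.tensorTensorTensorComm ℂ C (V2 →ₗ[ℂ] V3) C (V1 →ₗ[ℂ] V2)) (x ⊗ₜ[ℂ] y))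

/-- the product of two elements of `C ⊗ Hom`, multiplying the algebra legs
and composing the hom legs -/
def homProd {C : Type} [NonUnitalRing C] [Module ℂ C]
    [SMulCommClass ℂ C C] [IsScalarTower ℂ C C] {V1 V2 V3 : Type}
    [AddCommGroup V1] [Module ℂ V1] [AddCommGroup V2] [Module ℂ V2]
    [AddCommGroup V3] [Module ℂ V3]
    (x : C ⊗[ℂ] (V2 →ₗ[ℂ] V3)) (y : C ⊗[ℂ] (V1 →ₗ[ℂ] V2)) :
    C ⊗[ℂ] (V1 →ₗ[ℂ] V3) :=
  (TensorProduct.map (LinearMap.mul' ℂ C) (TensorProduct.lift (LinearMap.llcomp ℂ V1 V2 V3)))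
    ((TensorProduct.tensorTensorTensorComm ℂ C (V2 →ₗ[ℂ] V3) C (V1 →ₗ[ℂ] V2)) (x ⊗ₜ[ℂ] y))

/-- the functional `ω_{f,v}` on a hom space, `T ↦ f (T v)` -/
def omega {V1 V2 : Type} [AddCommGroup V1] [Module ℂ V1] [AddCommGroup V2] [Module ℂ V2]
    (f : V2 →ₗ[ℂ] ℂ) (v : V1) : (V1 →ₗ[ℂ] V2) →ₗ[ℂ] ℂ where
  toFun T := f (T v)
  map_add' := by intros; simp
  map_smul' := by intros; simp

/-- slicing a functional on the hom leg of an element of `C ⊗ Hom`: `(id ⊗ ω)(x)` -/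
def matCoeff {C : Type} [AddCommGroup C] [Module ℂ C] {V1 V2 : Type}
    [AddCommGroup V1] [Module ℂ V1] [AddCommGroup V2] [Module ℂ V2]
    (ω : (V1 →ₗ[ℂ] V2) →ₗ[ℂ] ℂ) (x : C ⊗[ℂ] (V1 →ₗ[ℂ] V2)) : C :=
  (TensorProduct.rid ℂ C) ((LinearMap.lTensor C ω) x)

namespace PartialBialgebra

variable {I C : Type} [NonUnitalRing C] [Module ℂ C]
  [SMulCommClass ℂ C C] [IsScalarTower ℂ C C] (B : PartialBialgebra I C)

/-- A corepresentation of a partial bialgebra on an `I²`-graded family of vector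
spaces: a family of elements `X(k,l;m,n) ∈ A(k,l;m,n) ⊗ Hom(V(m,n),V(k,l))` such
that `(Δ_{pq} ⊗ id)(X(k,l;m,n)) = X(k,l;p,q)₁₃ X(p,q;m,n)₂₃` and
`(ε ⊗ id)(X(k,l;m,n)) = δ_{k,m} δ_{l,n} id`. -/
structure Corep (V : I → I → Type) [∀ k l, AddCommGroup (V k l)]
    [∀ k l, Module ℂ (V k l)] : Type 1 where
  X : ∀ k l m n : I, C ⊗[ℂ] (V m n →ₗ[ℂ] V k l)
  X_mem : ∀ k l m n, X k l m n ∈ LinearMap.range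
    (LinearMap.rTensor (V m n →ₗ[ℂ] V k l) (B.comp k l m n).subtype)
  comul : ∀ k l m n p q,
    LinearMap.rTensor (V m n →ₗ[ℂ] V k l) (B.Δ p q) (X k l m n)
      = corepProd (X k l p q) (X p q m n)
  counit_diag : ∀ k l,
    (TensorProduct.lid ℂ (V k l →ₗ[ℂ] V k l))
      ((LinearMap.rTensor (V k l →ₗ[ℂ] V k l) B.ε) (X k l k l)) = LinearMap.id
  counit_ne : ∀ k l m n, (k, l) ≠ (m, n) →
    (TensorProduct.lid ℂ (V m n →ₗ[ℂ] V k l))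
      ((LinearMap.rTensor (V m n →ₗ[ℂ] V k l) B.ε) (X k l m n)) = 0

variable {B}

/-- a morphism of corepresentations: `(1 ⊗ T(k,l)) X(k,l;m,n) = Y(k,l;m,n) (1 ⊗ T(m,n))` -/
def IsCorepMorphism {V W : I → I → Type}
    [∀ k l, AddCommGroup (V k l)] [∀ k l, Module ℂ (V k l)]
    [∀ k l, AddCommGroup (W k l)] [∀ k l, Module ℂ (W k l)]
    (𝒳 : Corep B V) (𝒴 : Corep B W) (T : ∀ k l, V k l →ₗ[ℂ] W k l) : Prop :=
  ∀ k l m n,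
    (LinearMap.lTensor C (conjHom (T k l) (LinearMap.id : V m n →ₗ[ℂ] V m n))) (𝒳.X k l m n)
      = (LinearMap.lTensor C (conjHom (LinearMap.id : W k l →ₗ[ℂ] W k l) (T m n)))
          (𝒴.X k l m n)

/-- an isomorphism of corepresentations -/
def IsCorepIso {V W : I → I → Type}
    [∀ k l, AddCommGroup (V k l)] [∀ k l, Module ℂ (V k l)]
    [∀ k l, AddCommGroup (W k l)] [∀ k l, Module ℂ (W k l)]
    (𝒳 : Corep B V) (𝒴 : Corep B W) (T : ∀ k l, V k l →ₗ[ℂ] W k l) : Prop :=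
  IsCorepMorphism 𝒳 𝒴 T ∧ ∀ k l, Function.Bijective (T k l)

/-- invariance of a family of subspaces under a corepresentation:
`(1 ⊗ π(k,l)) X(k,l;m,n) (1 ⊗ ι(m,n)) = 0` -/
def IsInvariant {V : I → I → Type}
    [∀ k l, AddCommGroup (V k l)] [∀ k l, Module ℂ (V k l)]
    (𝒳 : Corep B V) (W : ∀ k l, Submodule ℂ (V k l)) : Prop :=
  ∀ k l m n,
    (LinearMap.lTensor C (conjHom (W k l).mkQ (W m n).subtype)) (𝒳.X k l m n) = 0

/-- irreducibility of a (nonzero) corepresentation -/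
def Corep.Irreducible {V : I → I → Type}
    [∀ k l, AddCommGroup (V k l)] [∀ k l, Module ℂ (V k l)]
    (𝒳 : Corep B V) : Prop :=
  (∃ k l, ∃ v : V k l, v ≠ 0) ∧
  ∀ W : ∀ k l, Submodule ℂ (V k l), IsInvariant 𝒳 W →
    (∀ k l, W k l = ⊥) ∨ (∀ k l, W k l = ⊤)

/-- the blocks `(X⁻¹)(k,l;m,n) := (S ⊗ id)(X(n,m;l,k))` of the generalized inverse -/
def Corep.inv {V : I → I → Type}
    [∀ k l, AddCommGroup (V k l)] [∀ k l, Module ℂ (V k l)]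
    (𝒳 : Corep B V) (S : C →ₗ[ℂ] C) (k l m n : I) : C ⊗[ℂ] (V l k →ₗ[ℂ] V n m) :=
  LinearMap.rTensor (V l k →ₗ[ℂ] V n m) S (𝒳.X n m l k)

/-- the space of matrix coefficients of a corepresentation -/
def Corep.coeffs {V : I → I → Type}
    [∀ k l, AddCommGroup (V k l)] [∀ k l, Module ℂ (V k l)]
    (𝒳 : Corep B V) : Submodule ℂ C :=
  Submodule.span ℂ {a | ∃ k l m n, ∃ f : V k l →ₗ[ℂ] ℂ, ∃ v : V m n,
    a = matCoeff (omega f v) (𝒳.X k l m n)}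

end PartialBialgebra

/-- `(a ⊗ T)* := a* ⊗ T†`, the star of an element of `C ⊗ B(H₁,H₂)` -/
def starAdj {C : Type} [NonUnitalRing C] [Module ℂ C] [StarRing C] [StarModule ℂ C]
    {H1 H2 : Type} [NormedAddCommGroup H1] [InnerProductSpace ℂ H1] [FiniteDimensional ℂ H1]
    [NormedAddCommGroup H2] [InnerProductSpace ℂ H2] [FiniteDimensional ℂ H2] :
    C ⊗[ℂ] (H1 →ₗ[ℂ] H2) →+ C ⊗[ℂ] (H2 →ₗ[ℂ] H1) :=
  TensorProduct.liftAddHom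
    { toFun := fun a => AddMonoidHom.mk' (fun T => star a ⊗ₜ[ℂ] LinearMap.adjoint T)
        (fun T T' => by simp [map_add, TensorProduct.tmul_add])
      map_zero' := by ext T; simp
      map_add' := fun a a' => by ext T; simp [star_add, TensorProduct.add_tmul] }
    (fun c a T => by
      simp only [AddMonoidHom.mk'_apply, AddMonoidHom.coe_mk, ZeroHom.coe_mk]
      rw [star_smul, TensorProduct.smul_tmul, map_smulₛₗ, starRingEnd_apply])

namespace PartialBialgebra

variable {I C : Type} [NonUnitalRing C] [Module ℂ C]
  [SMulCommClass ℂ C C] [IsScalarTower ℂ C C] {B : PartialBialgebra I C}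

/-- unitarity of a corepresentation on a family of Hilbert spaces:
`(X⁻¹)(k,l;m,n) = (X(l,k;n,m))*` -/
def Corep.IsUnitary [StarRing C] [StarModule ℂ C] {H : I → I → Type}
    [∀ k l, NormedAddCommGroup (H k l)] [∀ k l, InnerProductSpace ℂ (H k l)]
    [∀ k l, FiniteDimensional ℂ (H k l)]
    (𝒳 : Corep B H) (S : C →ₗ[ℂ] C) : Prop :=
  ∀ k l m n, 𝒳.inv S k l m n = starAdj (𝒳.X l k n m)

end PartialBialgebra

section TotalEmbedding

variable {I : Type} (V : I → I → Type)
  [∀ k l, AddCommGroup (V k l)] [∀ k l, Module ℂ (V k l)]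

/-- the total space `⊕_{k,l} V(k,l)` of an `I²`-graded family -/
abbrev TotalSpace : Type := Π₀ p : I × I, V p.1 p.2

/-- embedding of a hom between homogeneous components into the endomorphisms of the
total space `⊕ V(k,l)`, via the inclusion of `V(k,l)` and the projection onto `V(m,n)` -/
def inclHom (k l m n : I) :
    (V m n →ₗ[ℂ] V k l) →ₗ[ℂ] (TotalSpace V →ₗ[ℂ] TotalSpace V) where
  toFun f := (DFinsupp.lsingle (R := ℂ) (k, l)) ∘ₗ f ∘ₗ (DFinsupp.lapply (R := ℂ) (m, n))
  map_add' f g := by ext x; simp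
  map_smul' c f := by ext x; simp

end TotalEmbedding

namespace PartialBialgebra

variable {I C : Type} [NonUnitalRing C] [Module ℂ C]
  [SMulCommClass ℂ C C] [IsScalarTower ℂ C C] {B : PartialBialgebra I C}
  {V : I → I → Type} [∀ k l, AddCommGroup (V k l)] [∀ k l, Module ℂ (V k l)]

/-- the block `X(k,l;m,n)` of a corepresentation, viewed inside
`A ⊗ End(⊕ V(k,l))` -/
def Corep.XT (𝒳 : Corep B V) (k l m n : I) :
    C ⊗[ℂ] (TotalSpace V →ₗ[ℂ] TotalSpace V) :=
  (LinearMap.lTensor C (inclHom V k l m n)) (𝒳.X k l m n)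

/-- the block `Z(k,l;m,n) = (S ⊗ id)(X(n,m;l,k))` of the generalized inverse, viewed
inside `A ⊗ End(⊕ V(k,l))` -/
def Corep.ZT (𝒳 : Corep B V) (S : C →ₗ[ℂ] C) (k l m n : I) :
    C ⊗[ℂ] (TotalSpace V →ₗ[ℂ] TotalSpace V) :=
  (LinearMap.lTensor C (inclHom V n m l k)) (𝒳.inv S k l m n)

end PartialBialgebra


section Helpers
set_option linter.unusedSectionVars false

open PartialBialgebra TensorProduct LinearMap

variable {I C : Type} [NonUnitalRing C] [Module ℂ C] [SMulCommClass ℂ C C] [IsScalarTower ℂ C C]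

variable {V1 V2 V3 V4 : Type} [AddCommGroup V1] [Module ℂ V1] [AddCommGroup V2] [Module ℂ V2]
    [AddCommGroup V3] [Module ℂ V3] [AddCommGroup V4] [Module ℂ V4]

lemma homProd_tmul (a b : C) (f : V2 →ₗ[ℂ] V3) (g : V1 →ₗ[ℂ] V2) :
    homProd (a ⊗ₜ[ℂ] f) (b ⊗ₜ[ℂ] g) = (a * b) ⊗ₜ[ℂ] (f ∘ₗ g) := by
  simp [homProd, TensorProduct.tensorTensorTensorComm_tmul, LinearMap.mul'_apply]
  rfl

lemma homProd_add_left (x x' : C ⊗[ℂ] (V2 →ₗ[ℂ] V3)) (y : C ⊗[ℂ] (V1 →ₗ[ℂ] V2)) :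
    homProd (x + x') y = homProd x y + homProd x' y := by
  simp [homProd, TensorProduct.add_tmul]

lemma homProd_add_right (x : C ⊗[ℂ] (V2 →ₗ[ℂ] V3)) (y y' : C ⊗[ℂ] (V1 →ₗ[ℂ] V2)) :
    homProd x (y + y') = homProd x y + homProd x y' := by
  simp [homProd, TensorProduct.tmul_add]

lemma homProd_zero_left (y : C ⊗[ℂ] (V1 →ₗ[ℂ] V2)) :
    homProd (0 : C ⊗[ℂ] (V2 →ₗ[ℂ] V3)) y = 0 := by
  rw [homProd, TensorProduct.zero_tmul, LinearEquiv.map_zero, LinearMap.map_zero]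

lemma homProd_zero_right (x : C ⊗[ℂ] (V2 →ₗ[ℂ] V3)) :
    homProd x (0 : C ⊗[ℂ] (V1 →ₗ[ℂ] V2)) = 0 := by
  rw [homProd, TensorProduct.tmul_zero, LinearEquiv.map_zero, LinearMap.map_zero]

lemma homProd_smul_left (c : ℂ) (x : C ⊗[ℂ] (V2 →ₗ[ℂ] V3)) (y : C ⊗[ℂ] (V1 →ₗ[ℂ] V2)) :
    homProd (c • x) y = c • homProd x y := by
  rw [homProd, homProd, ← TensorProduct.smul_tmul', LinearEquiv.map_smul, LinearMap.map_smul]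

lemma homProd_smul_right (c : ℂ) (x : C ⊗[ℂ] (V2 →ₗ[ℂ] V3)) (y : C ⊗[ℂ] (V1 →ₗ[ℂ] V2)) :
    homProd x (c • y) = c • homProd x y := by
  rw [homProd, homProd, TensorProduct.tmul_smul, LinearEquiv.map_smul, LinearMap.map_smul]

lemma corepProd_tmul (a b : C) (f : V2 →ₗ[ℂ] V3) (g : V1 →ₗ[ℂ] V2) :
    corepProd (a ⊗ₜ[ℂ] f) (b ⊗ₜ[ℂ] g) = (a ⊗ₜ[ℂ] b) ⊗ₜ[ℂ] (f ∘ₗ g) := by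
  simp [corepProd, TensorProduct.tensorTensorTensorComm_tmul]
  rfl

lemma corepProd_add_left (x x' : C ⊗[ℂ] (V2 →ₗ[ℂ] V3)) (y : C ⊗[ℂ] (V1 →ₗ[ℂ] V2)) :
    corepProd (x + x') y = corepProd x y + corepProd x' y := by
  simp [corepProd, TensorProduct.add_tmul]

lemma corepProd_add_right (x : C ⊗[ℂ] (V2 →ₗ[ℂ] V3)) (y y' : C ⊗[ℂ] (V1 →ₗ[ℂ] V2)) :
    corepProd x (y + y') = corepProd x y + corepProd x y' := by
  simp [corepProd, TensorProduct.tmul_add]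

lemma corepProd_zero_left (y : C ⊗[ℂ] (V1 →ₗ[ℂ] V2)) :
    corepProd (0 : C ⊗[ℂ] (V2 →ₗ[ℂ] V3)) y = 0 := by
  rw [corepProd, TensorProduct.zero_tmul, LinearEquiv.map_zero, LinearMap.map_zero]

lemma corepProd_zero_right (x : C ⊗[ℂ] (V2 →ₗ[ℂ] V3)) :
    corepProd x (0 : C ⊗[ℂ] (V1 →ₗ[ℂ] V2)) = 0 := by
  rw [corepProd, TensorProduct.tmul_zero, LinearEquiv.map_zero, LinearMap.map_zero]

lemma rTensor_lS_corepProd (S : C →ₗ[ℂ] C)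
    (x : C ⊗[ℂ] (V2 →ₗ[ℂ] V3)) (y : C ⊗[ℂ] (V1 →ₗ[ℂ] V2)) :
    LinearMap.rTensor (V1 →ₗ[ℂ] V3) (LinearMap.mul' ℂ C ∘ₗ LinearMap.lTensor C S)
      (corepProd x y) = homProd x (LinearMap.rTensor (V1 →ₗ[ℂ] V2) S y) := by
  induction x using TensorProduct.induction_on with
  | zero => rw [corepProd_zero_left, LinearMap.map_zero, homProd_zero_left]
  | add x x' hx hx' =>
      rw [corepProd_add_left, LinearMap.map_add, hx, hx', homProd_add_left]
  | tmul a f =>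
      induction y using TensorProduct.induction_on with
      | zero => rw [corepProd_zero_right, LinearMap.map_zero, LinearMap.map_zero,
          homProd_zero_right]
      | add y y' hy hy' =>
          rw [corepProd_add_right, LinearMap.map_add, hy, hy', LinearMap.map_add,
            homProd_add_right]
      | tmul b g =>
          rw [corepProd_tmul, LinearMap.rTensor_tmul, LinearMap.rTensor_tmul,
            homProd_tmul]
          simp

lemma rTensor_rS_corepProd (S : C →ₗ[ℂ] C)
    (x : C ⊗[ℂ] (V2 →ₗ[ℂ] V3)) (y : C ⊗[ℂ] (V1 →ₗ[ℂ] V2)) :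
    LinearMap.rTensor (V1 →ₗ[ℂ] V3) (LinearMap.mul' ℂ C ∘ₗ LinearMap.rTensor C S)
      (corepProd x y) = homProd (LinearMap.rTensor (V2 →ₗ[ℂ] V3) S x) y := by
  induction x using TensorProduct.induction_on with
  | zero => rw [corepProd_zero_left, LinearMap.map_zero, LinearMap.map_zero, homProd_zero_left]
  | add x x' hx hx' =>
      rw [corepProd_add_left, LinearMap.map_add, hx, hx', LinearMap.map_add, homProd_add_left]
  | tmul a f =>
      induction y using TensorProduct.induction_on with
      | zero => rw [corepProd_zero_right, LinearMap.map_zero, homProd_zero_right]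
      | add y y' hy hy' =>
          rw [corepProd_add_right, LinearMap.map_add, hy, hy', homProd_add_right]
      | tmul b g =>
          rw [corepProd_tmul, LinearMap.rTensor_tmul, LinearMap.rTensor_tmul,
            homProd_tmul]
          simp

lemma homProd_assoc (x : C ⊗[ℂ] (V3 →ₗ[ℂ] V4)) (y : C ⊗[ℂ] (V2 →ₗ[ℂ] V3))
    (z : C ⊗[ℂ] (V1 →ₗ[ℂ] V2)) :
    homProd (homProd x y) z = homProd x (homProd y z) := by
  induction x using TensorProduct.induction_on with
  | zero => rw [homProd_zero_left, homProd_zero_left, homProd_zero_left]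
  | add x x' hx hx' => rw [homProd_add_left, homProd_add_left, hx, hx', homProd_add_left]
  | tmul a f =>
    induction y using TensorProduct.induction_on with
    | zero => rw [homProd_zero_right, homProd_zero_left, homProd_zero_left, homProd_zero_right]
    | add y y' hy hy' => rw [homProd_add_right, homProd_add_left, hy, hy',
        homProd_add_left, homProd_add_right]
    | tmul b g =>
      induction z using TensorProduct.induction_on with
      | zero => rw [homProd_zero_right, homProd_zero_right, homProd_zero_right]
      | add z z' hz hz' => rw [homProd_add_right, hz, hz', homProd_add_right, homProd_add_right]
      | tmul c h =>
        rw [homProd_tmul, homProd_tmul, homProd_tmul, homProd_tmul, mul_assoc,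
          LinearMap.comp_assoc]

lemma inclHom_comp_eq {V : I → I → Type} [∀ k l, AddCommGroup (V k l)]
    [∀ k l, Module ℂ (V k l)] (k l m n p q : I)
    (T : V m n →ₗ[ℂ] V k l) (U : V p q →ₗ[ℂ] V m n) :
    inclHom V k l m n T ∘ₗ inclHom V m n p q U = inclHom V k l p q (T ∘ₗ U) := by
  ext x
  simp [inclHom]

lemma inclHom_comp_ne {V : I → I → Type} [∀ k l, AddCommGroup (V k l)]
    [∀ k l, Module ℂ (V k l)] {m n m' n' : I} (h : (m, n) ≠ (m', n')) (k l p q : I)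
    (T : V m n →ₗ[ℂ] V k l) (U : V p q →ₗ[ℂ] V m' n') :
    inclHom V k l m n T ∘ₗ inclHom V m' n' p q U = 0 := by
  ext x
  have h' : ¬(m' = m ∧ n' = n) := fun hc => h (by rw [hc.1, hc.2])
  simp [inclHom, DFinsupp.single_eq_of_ne (Ne.symm h), h']

lemma homProd_lTensor_eq {V : I → I → Type} [∀ k l, AddCommGroup (V k l)]
    [∀ k l, Module ℂ (V k l)] (k l m n p q : I)
    (x : C ⊗[ℂ] (V m n →ₗ[ℂ] V k l)) (y : C ⊗[ℂ] (V p q →ₗ[ℂ] V m n)) :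
    homProd (LinearMap.lTensor C (inclHom V k l m n) x)
      (LinearMap.lTensor C (inclHom V m n p q) y)
      = LinearMap.lTensor C (inclHom V k l p q) (homProd x y) := by
  induction x using TensorProduct.induction_on with
  | zero => rw [LinearMap.map_zero, homProd_zero_left, homProd_zero_left, LinearMap.map_zero]
  | add x x' hx hx' => rw [LinearMap.map_add, homProd_add_left, hx, hx', homProd_add_left,
      LinearMap.map_add]
  | tmul a f =>
    induction y using TensorProduct.induction_on with
    | zero => rw [LinearMap.map_zero, homProd_zero_right, homProd_zero_right, LinearMap.map_zero]
    | add y y' hy hy' => rw [LinearMap.map_add, homProd_add_right, hy, hy', homProd_add_right,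
        LinearMap.map_add]
    | tmul b g =>
      rw [LinearMap.lTensor_tmul, LinearMap.lTensor_tmul, homProd_tmul, homProd_tmul,
        LinearMap.lTensor_tmul, inclHom_comp_eq]

lemma homProd_lTensor_ne {V : I → I → Type} [∀ k l, AddCommGroup (V k l)]
    [∀ k l, Module ℂ (V k l)] {m n m' n' : I} (h : (m, n) ≠ (m', n')) (k l p q : I)
    (x : C ⊗[ℂ] (V m n →ₗ[ℂ] V k l)) (y : C ⊗[ℂ] (V p q →ₗ[ℂ] V m' n')) :
    homProd (LinearMap.lTensor C (inclHom V k l m n) x)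
      (LinearMap.lTensor C (inclHom V m' n' p q) y) = 0 := by
  induction x using TensorProduct.induction_on with
  | zero => rw [LinearMap.map_zero, homProd_zero_left]
  | add x x' hx hx' => rw [LinearMap.map_add, homProd_add_left, hx, hx', add_zero]
  | tmul a f =>
    induction y using TensorProduct.induction_on with
    | zero => rw [LinearMap.map_zero, homProd_zero_right]
    | add y y' hy hy' => rw [LinearMap.map_add, homProd_add_right, hy, hy', add_zero]
    | tmul b g =>
      rw [LinearMap.lTensor_tmul, LinearMap.lTensor_tmul, homProd_tmul,
        inclHom_comp_ne h, TensorProduct.tmul_zero]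

lemma mem_comp_iff (B : PartialBialgebra I C) {k l m n : I} {a : C} :
    a ∈ B.comp k l m n ↔ B.E k m * a = a ∧ a * B.E l n = a := Iff.rfl

lemma E_mul_of_mem (B : PartialBialgebra I C) {k l m n : I} {a : C}
    (ha : a ∈ B.comp k l m n) (p q : I) :
    B.E p q * a = if (p, q) = (k, m) then a else 0 := by
  obtain ⟨h1, _⟩ := (mem_comp_iff B).mp ha
  split_ifs with h
  · obtain ⟨rfl, rfl⟩ := Prod.mk.injEq _ _ _ _ ▸ h
    exact h1
  · rw [← h1, ← mul_assoc, B.E_orth p k q m h, zero_mul]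

lemma mul_E_of_mem (B : PartialBialgebra I C) {k l m n : I} {a : C}
    (ha : a ∈ B.comp k l m n) (p q : I) :
    a * B.E p q = if (p, q) = (l, n) then a else 0 := by
  obtain ⟨_, h2⟩ := (mem_comp_iff B).mp ha
  split_ifs with h
  · obtain ⟨rfl, rfl⟩ := Prod.mk.injEq _ _ _ _ ▸ h
    exact h2
  · rw [← h2, mul_assoc, B.E_orth l p n q (Ne.symm h),
      mul_zero]

lemma tensor_zero_of_subsingleton {M : Type} [AddCommGroup M] [Module ℂ M]
    [Subsingleton M] (w : C ⊗[ℂ] M) : w = 0 := by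
  induction w using TensorProduct.induction_on with
  | zero => rfl
  | tmul a m => rw [Subsingleton.elim m 0, TensorProduct.tmul_zero]
  | add x y hx hy => rw [hx, hy, add_zero]

lemma Δ_rTensor_row_finite (B : PartialBialgebra I C) (m : I) {M : Type} [AddCommGroup M]
    [Module ℂ M] (w : C ⊗[ℂ] M) :
    {n | LinearMap.rTensor M (B.Δ m n) w ≠ 0}.Finite := by
  induction w using TensorProduct.induction_on with
  | zero =>
    convert Set.finite_empty (α := I)
    ext n; simp
  | tmul a T =>
    apply (B.Δ_rcf_row a m).subset
    intro n hn
    simp only [Set.mem_setOf_eq, LinearMap.rTensor_tmul] at hn ⊢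
    intro h
    exact hn (by rw [h, TensorProduct.zero_tmul])
  | add x y hx hy =>
    apply (hx.union hy).subset
    intro n hn
    simp only [Set.mem_setOf_eq, Set.mem_union, LinearMap.map_add] at hn ⊢
    by_contra hc
    push_neg at hc
    exact hn (by rw [hc.1, hc.2, add_zero])

lemma Δ_rTensor_col_finite (B : PartialBialgebra I C) (s : I) {M : Type} [AddCommGroup M]
    [Module ℂ M] (w : C ⊗[ℂ] M) :
    {r | LinearMap.rTensor M (B.Δ r s) w ≠ 0}.Finite := by
  induction w using TensorProduct.induction_on with
  | zero =>
    convert Set.finite_empty (α := I)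
    ext n; simp
  | tmul a T =>
    apply (B.Δ_rcf_col a s).subset
    intro n hn
    simp only [Set.mem_setOf_eq, LinearMap.rTensor_tmul] at hn ⊢
    intro h
    exact hn (by rw [h, TensorProduct.zero_tmul])
  | add x y hx hy =>
    apply (hx.union hy).subset
    intro n hn
    simp only [Set.mem_setOf_eq, Set.mem_union, LinearMap.map_add] at hn ⊢
    by_contra hc
    push_neg at hc
    exact hn (by rw [hc.1, hc.2, add_zero])

lemma lamMul_of_mem (B : PartialBialgebra I C) {k l m n : I} {a : C}
    (ha : a ∈ B.comp k l m n) (p : I) : B.lamMul p a = if p = k then a else 0 := by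
  unfold PartialBialgebra.lamMul
  rcases eq_or_ne p k with rfl | h
  · rw [if_pos rfl, finsum_eq_single _ m (fun q hq => by
      rw [E_mul_of_mem B ha, if_neg (by simp [hq])]),
      E_mul_of_mem B ha, if_pos rfl]
  · rw [if_neg h, finsum_eq_zero_of_forall_eq_zero (fun q => by
      rw [E_mul_of_mem B ha, if_neg (by simp [h])])]

lemma mulRho_of_mem (B : PartialBialgebra I C) {k l m n : I} {a : C}
    (ha : a ∈ B.comp k l m n) (p : I) : B.mulRho a p = if p = n then a else 0 := by
  unfold PartialBialgebra.mulRho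
  rcases eq_or_ne p n with rfl | h
  · rw [if_pos rfl, finsum_eq_single _ l (fun q hq => by
      rw [mul_E_of_mem B ha, if_neg (by simp [hq])]),
      mul_E_of_mem B ha, if_pos rfl]
  · rw [if_neg h, finsum_eq_zero_of_forall_eq_zero (fun q => by
      rw [mul_E_of_mem B ha, if_neg (by simp [h])])]

lemma key1 {B : PartialBialgebra I C} {S : C →ₗ[ℂ] C} (hS : B.IsAntipode S)
    {k l k' l' : I} {M : Type} [AddCommGroup M] [Module ℂ M] {w : C ⊗[ℂ] M}
    (hw : w ∈ LinearMap.range (LinearMap.rTensor M (B.comp k l k' l').subtype)) (m : I) :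
    ∑ᶠ n, LinearMap.rTensor M ((LinearMap.mul' ℂ C ∘ₗ LinearMap.lTensor C S) ∘ₗ B.Δ m n) w
      = LinearMap.rTensor M (LinearMap.toSpanSingleton ℂ C (B.E k m) ∘ₗ B.ε) w := by
  obtain ⟨u, rfl⟩ := hw
  induction u using TensorProduct.induction_on with
  | zero =>
    rw [map_zero, map_zero, finsum_eq_zero_of_forall_eq_zero (fun n => map_zero _)]
  | add u u' hu hu' =>
    have hfin : ∀ v : C ⊗[ℂ] M, (Function.support fun n =>
        LinearMap.rTensor M ((LinearMap.mul' ℂ C ∘ₗ LinearMap.lTensor C S) ∘ₗ B.Δ m n) v).Finite :=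
      fun v => (Δ_rTensor_row_finite B m v).subset (fun n hn => by
        simp only [Function.mem_support, Set.mem_setOf_eq] at hn ⊢
        intro h
        exact hn (by rw [LinearMap.rTensor_comp, LinearMap.comp_apply, h, map_zero]))
    rw [map_add, map_add]
    calc ∑ᶠ n, LinearMap.rTensor M ((LinearMap.mul' ℂ C ∘ₗ LinearMap.lTensor C S) ∘ₗ B.Δ m n)
          ((LinearMap.rTensor M (B.comp k l k' l').subtype) u
            + (LinearMap.rTensor M (B.comp k l k' l').subtype) u')
        = ∑ᶠ n, (LinearMap.rTensor M ((LinearMap.mul' ℂ C ∘ₗ LinearMap.lTensor C S) ∘ₗ B.Δ m n)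
            ((LinearMap.rTensor M (B.comp k l k' l').subtype) u)
          + LinearMap.rTensor M ((LinearMap.mul' ℂ C ∘ₗ LinearMap.lTensor C S) ∘ₗ B.Δ m n)
            ((LinearMap.rTensor M (B.comp k l k' l').subtype) u')) := by
          simp only [map_add]
      _ = _ := by
          rw [finsum_add_distrib (hfin _) (hfin _), hu, hu']
  | tmul x T =>
    simp only [LinearMap.rTensor_tmul]
    have hfin : (Function.support fun n =>
        (LinearMap.mul' ℂ C ∘ₗ LinearMap.lTensor C S) (B.Δ m n (x : C))).Finite :=
      (B.Δ_rcf_row (x : C) m).subset (fun n hn => by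
        simp only [Function.mem_support, Set.mem_setOf_eq] at hn ⊢
        intro h
        exact hn (by rw [h, map_zero]))
    have hmap := (((TensorProduct.mk ℂ C M).flip T).toAddMonoidHom.map_finsum hfin).symm
    simp only [LinearMap.toAddMonoidHom_coe, LinearMap.flip_apply, TensorProduct.mk_apply,
      LinearMap.comp_apply, Submodule.subtype_apply] at hmap ⊢
    rw [hmap]
    have hsum : (∑ᶠ n, (LinearMap.mul' ℂ C) ((LinearMap.lTensor C S) (B.Δ m n (x : C))))
        = B.ε (x : C) • B.E k m := by
      rw [hS.2.1 (x : C) m, finsum_eq_single _ k (fun p hp => by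
        rw [lamMul_of_mem B x.2, if_neg hp, map_zero, zero_smul]),
        lamMul_of_mem B x.2, if_pos rfl]
    rw [hsum, LinearMap.toSpanSingleton_apply]
  
lemma key2 {B : PartialBialgebra I C} {S : C →ₗ[ℂ] C} (hS : B.IsAntipode S)
    {k l k' l' : I} {M : Type} [AddCommGroup M] [Module ℂ M] {w : C ⊗[ℂ] M}
    (hw : w ∈ LinearMap.range (LinearMap.rTensor M (B.comp k l k' l').subtype)) (s : I) :
    ∑ᶠ r, LinearMap.rTensor M ((LinearMap.mul' ℂ C ∘ₗ LinearMap.rTensor C S) ∘ₗ B.Δ r s) w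
      = LinearMap.rTensor M (LinearMap.toSpanSingleton ℂ C (B.E s l') ∘ₗ B.ε) w := by
  obtain ⟨u, rfl⟩ := hw
  induction u using TensorProduct.induction_on with
  | zero =>
    rw [map_zero, map_zero, finsum_eq_zero_of_forall_eq_zero (fun n => map_zero _)]
  | add u u' hu hu' =>
    have hfin : ∀ v : C ⊗[ℂ] M, (Function.support fun r =>
        LinearMap.rTensor M ((LinearMap.mul' ℂ C ∘ₗ LinearMap.rTensor C S) ∘ₗ B.Δ r s) v).Finite :=
      fun v => (Δ_rTensor_col_finite B s v).subset (fun n hn => by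
        simp only [Function.mem_support, Set.mem_setOf_eq] at hn ⊢
        intro h
        exact hn (by rw [LinearMap.rTensor_comp, LinearMap.comp_apply, h, map_zero]))
    rw [map_add, map_add]
    calc ∑ᶠ r, LinearMap.rTensor M ((LinearMap.mul' ℂ C ∘ₗ LinearMap.rTensor C S) ∘ₗ B.Δ r s)
          ((LinearMap.rTensor M (B.comp k l k' l').subtype) u
            + (LinearMap.rTensor M (B.comp k l k' l').subtype) u')
        = ∑ᶠ r, (LinearMap.rTensor M ((LinearMap.mul' ℂ C ∘ₗ LinearMap.rTensor C S) ∘ₗ B.Δ r s)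
            ((LinearMap.rTensor M (B.comp k l k' l').subtype) u)
          + LinearMap.rTensor M ((LinearMap.mul' ℂ C ∘ₗ LinearMap.rTensor C S) ∘ₗ B.Δ r s)
            ((LinearMap.rTensor M (B.comp k l k' l').subtype) u')) := by
          simp only [map_add]
      _ = _ := by
          rw [finsum_add_distrib (hfin _) (hfin _), hu, hu']
  | tmul x T =>
    simp only [LinearMap.rTensor_tmul]
    have hfin : (Function.support fun r =>
        (LinearMap.mul' ℂ C ∘ₗ LinearMap.rTensor C S) (B.Δ r s (x : C))).Finite :=
      (B.Δ_rcf_col (x : C) s).subset (fun n hn => by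
        simp only [Function.mem_support, Set.mem_setOf_eq] at hn ⊢
        intro h
        exact hn (by rw [h, map_zero]))
    have hmap := (((TensorProduct.mk ℂ C M).flip T).toAddMonoidHom.map_finsum hfin).symm
    simp only [LinearMap.toAddMonoidHom_coe, LinearMap.flip_apply, TensorProduct.mk_apply,
      LinearMap.comp_apply, Submodule.subtype_apply] at hmap ⊢
    rw [hmap]
    have hsum : (∑ᶠ r, (LinearMap.mul' ℂ C) ((LinearMap.rTensor C S) (B.Δ r s (x : C))))
        = B.ε (x : C) • B.E s l' := by
      rw [hS.2.2 (x : C) s, finsum_eq_single _ l' (fun p hp => by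
        rw [mulRho_of_mem B x.2, if_neg hp, map_zero, zero_smul]),
        mulRho_of_mem B x.2, if_pos rfl]
    rw [hsum, LinearMap.toSpanSingleton_apply]

variable {V : I → I → Type} [∀ k l, AddCommGroup (V k l)] [∀ k l, Module ℂ (V k l)]
variable {B : PartialBialgebra I C} {S : C →ₗ[ℂ] C}

lemma inv_mem (hS : B.IsAntipode S) (𝒳 : Corep B V) (k l m n : I) :
    𝒳.inv S k l m n ∈ LinearMap.range
      (LinearMap.rTensor (V l k →ₗ[ℂ] V n m) (B.comp k l m n).subtype) := by
  obtain ⟨u, hu⟩ := 𝒳.X_mem n m l k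
  rw [Corep.inv, ← hu]
  clear hu
  induction u using TensorProduct.induction_on with
  | zero => rw [map_zero, map_zero]; exact zero_mem _
  | add u u' hu hu' => rw [map_add, map_add]; exact add_mem hu hu'
  | tmul x T =>
    exact ⟨(⟨S (x : C), hS.1 n m l k (x : C) x.2⟩ : B.comp k l m n) ⊗ₜ[ℂ] T, by
      simp only [LinearMap.rTensor_tmul, Submodule.subtype_apply]⟩

lemma counit_rTensor_diag (𝒳 : Corep B V) (k l : I) :
    LinearMap.rTensor (V k l →ₗ[ℂ] V k l) B.ε (𝒳.X k l k l)
      = (1 : ℂ) ⊗ₜ[ℂ] (LinearMap.id : V k l →ₗ[ℂ] V k l) := by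
  apply (TensorProduct.lid ℂ (V k l →ₗ[ℂ] V k l)).injective
  rw [𝒳.counit_diag k l, TensorProduct.lid_tmul, one_smul]

lemma counit_rTensor_ne (𝒳 : Corep B V) {k l m n : I} (h : (k, l) ≠ (m, n)) :
    LinearMap.rTensor (V m n →ₗ[ℂ] V k l) B.ε (𝒳.X k l m n) = 0 := by
  apply (TensorProduct.lid ℂ (V m n →ₗ[ℂ] V k l)).injective
  rw [𝒳.counit_ne k l m n h, LinearEquiv.map_zero]

lemma star1 (hS : B.IsAntipode S) (𝒳 : Corep B V) (k l m k' : I) :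
    ∑ᶠ n, homProd (𝒳.X k l m n) (LinearMap.rTensor (V k' l →ₗ[ℂ] V m n) S (𝒳.X m n k' l))
      = LinearMap.rTensor (V k' l →ₗ[ℂ] V k l)
          (LinearMap.toSpanSingleton ℂ C (B.E k m) ∘ₗ B.ε) (𝒳.X k l k' l) := by
  have h : ∀ n, homProd (𝒳.X k l m n) (LinearMap.rTensor (V k' l →ₗ[ℂ] V m n) S (𝒳.X m n k' l))
      = LinearMap.rTensor (V k' l →ₗ[ℂ] V k l)
          ((LinearMap.mul' ℂ C ∘ₗ LinearMap.lTensor C S) ∘ₗ B.Δ m n) (𝒳.X k l k' l) := by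
    intro n
    rw [LinearMap.rTensor_comp, LinearMap.comp_apply, 𝒳.comul k l k' l m n,
      rTensor_lS_corepProd]
  simp only [h]
  exact key1 hS (𝒳.X_mem k l k' l) m

lemma star2 (hS : B.IsAntipode S) (𝒳 : Corep B V) (k l n l' : I) :
    ∑ᶠ m, homProd (LinearMap.rTensor (V m n →ₗ[ℂ] V k l) S (𝒳.X k l m n)) (𝒳.X m n k l')
      = LinearMap.rTensor (V k l' →ₗ[ℂ] V k l)
          (LinearMap.toSpanSingleton ℂ C (B.E n l') ∘ₗ B.ε) (𝒳.X k l k l') := by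
  have h : ∀ m, homProd (LinearMap.rTensor (V m n →ₗ[ℂ] V k l) S (𝒳.X k l m n)) (𝒳.X m n k l')
      = LinearMap.rTensor (V k l' →ₗ[ℂ] V k l)
          ((LinearMap.mul' ℂ C ∘ₗ LinearMap.rTensor C S) ∘ₗ B.Δ m n) (𝒳.X k l k l') := by
    intro m
    rw [LinearMap.rTensor_comp, LinearMap.comp_apply, 𝒳.comul k l k l' m n,
      rTensor_rS_corepProd]
  simp only [h]
  exact key2 hS (𝒳.X_mem k l k l') n

lemma star1_eq (hS : B.IsAntipode S) (𝒳 : Corep B V) (k l m : I) :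
    ∑ᶠ n, homProd (𝒳.X k l m n) (LinearMap.rTensor (V k l →ₗ[ℂ] V m n) S (𝒳.X m n k l))
      = (B.E k m) ⊗ₜ[ℂ] (LinearMap.id : V k l →ₗ[ℂ] V k l) := by
  rw [star1 hS 𝒳 k l m k, LinearMap.rTensor_comp, LinearMap.comp_apply,
    counit_rTensor_diag, LinearMap.rTensor_tmul, LinearMap.toSpanSingleton_apply, one_smul]

lemma star1_ne (hS : B.IsAntipode S) (𝒳 : Corep B V) {k k' : I} (h : k ≠ k') (l m : I) :
    ∑ᶠ n, homProd (𝒳.X k l m n) (LinearMap.rTensor (V k' l →ₗ[ℂ] V m n) S (𝒳.X m n k' l))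
      = 0 := by
  rw [star1 hS 𝒳 k l m k', LinearMap.rTensor_comp, LinearMap.comp_apply,
    counit_rTensor_ne 𝒳 (by simp [h]), map_zero]

lemma star2_eq (hS : B.IsAntipode S) (𝒳 : Corep B V) (k l n : I) :
    ∑ᶠ m, homProd (LinearMap.rTensor (V m n →ₗ[ℂ] V k l) S (𝒳.X k l m n)) (𝒳.X m n k l)
      = (B.E n l) ⊗ₜ[ℂ] (LinearMap.id : V k l →ₗ[ℂ] V k l) := by
  rw [star2 hS 𝒳 k l n l, LinearMap.rTensor_comp, LinearMap.comp_apply,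
    counit_rTensor_diag, LinearMap.rTensor_tmul, LinearMap.toSpanSingleton_apply, one_smul]

lemma star2_ne (hS : B.IsAntipode S) (𝒳 : Corep B V) {l l' : I} (h : l ≠ l') (k n : I) :
    ∑ᶠ m, homProd (LinearMap.rTensor (V m n →ₗ[ℂ] V k l) S (𝒳.X k l m n)) (𝒳.X m n k l')
      = 0 := by
  rw [star2 hS 𝒳 k l n l', LinearMap.rTensor_comp, LinearMap.comp_apply,
    counit_rTensor_ne 𝒳 (by simp [h]), map_zero]

lemma homProd_E_id_left {B : PartialBialgebra I C} {k l m n : I} (p q : I)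
    {w : C ⊗[ℂ] (V1 →ₗ[ℂ] V2)}
    (hw : w ∈ LinearMap.range (LinearMap.rTensor (V1 →ₗ[ℂ] V2) (B.comp k l m n).subtype)) :
    homProd ((B.E p q) ⊗ₜ[ℂ] (LinearMap.id : V2 →ₗ[ℂ] V2)) w
      = if (p, q) = (k, m) then w else 0 := by
  obtain ⟨u, rfl⟩ := hw
  induction u using TensorProduct.induction_on with
  | zero => rw [map_zero, homProd_zero_right]; split_ifs <;> rfl
  | add u u' hu hu' =>
    rw [map_add, homProd_add_right, hu, hu']
    split_ifs <;> simp
  | tmul x T =>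
    rw [LinearMap.rTensor_tmul, homProd_tmul, LinearMap.id_comp, Submodule.subtype_apply,
      E_mul_of_mem B x.2 p q]
    split_ifs with h
    · rfl
    · rw [TensorProduct.zero_tmul]

lemma homProd_E_id_right {B : PartialBialgebra I C} {k l m n : I} (p q : I)
    {w : C ⊗[ℂ] (V1 →ₗ[ℂ] V2)}
    (hw : w ∈ LinearMap.range (LinearMap.rTensor (V1 →ₗ[ℂ] V2) (B.comp k l m n).subtype)) :
    homProd w ((B.E p q) ⊗ₜ[ℂ] (LinearMap.id : V1 →ₗ[ℂ] V1))
      = if (p, q) = (l, n) then w else 0 := by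
  obtain ⟨u, rfl⟩ := hw
  induction u using TensorProduct.induction_on with
  | zero => rw [map_zero, homProd_zero_left]; split_ifs <;> rfl
  | add u u' hu hu' =>
    rw [map_add, homProd_add_left, hu, hu']
    split_ifs <;> simp
  | tmul x T =>
    rw [LinearMap.rTensor_tmul, homProd_tmul, LinearMap.comp_id, Submodule.subtype_apply,
      mul_E_of_mem B x.2 p q]
    split_ifs with h
    · rfl
    · rw [TensorProduct.zero_tmul]

lemma X_zero_of_dom (𝒳 : Corep B V) {p q : I} (h : ¬∃ v : V p q, v ≠ 0) (k l : I) :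
    𝒳.X k l p q = 0 := by
  haveI : Subsingleton (V p q) := ⟨fun a b => by push_neg at h; rw [h a, h b]⟩
  haveI : Subsingleton (V p q →ₗ[ℂ] V k l) :=
    ⟨fun f g => by ext v; rw [Subsingleton.elim v 0, map_zero, map_zero]⟩
  exact tensor_zero_of_subsingleton _

lemma linearMap_finsum {α M N : Type} [AddCommGroup M] [Module ℂ M] [AddCommGroup N]
    [Module ℂ N] (g : M →ₗ[ℂ] N) {f : α → M} (hf : (Function.support f).Finite) :
    g (∑ᶠ i, f i) = ∑ᶠ i, g (f i) :=
  g.toAddMonoidHom.map_finsum hf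

set_option maxHeartbeats 1000000 in
lemma homProd_finsum_left {α : Type} (y : C ⊗[ℂ] (V1 →ₗ[ℂ] V2))
    {f : α → C ⊗[ℂ] (V2 →ₗ[ℂ] V3)} (hf : (Function.support f).Finite) :
    homProd (∑ᶠ i, f i) y = ∑ᶠ i, homProd (f i) y :=
  (AddMonoidHom.mk' (fun w => homProd w y) (fun a b => homProd_add_left a b y)).map_finsum hf

set_option maxHeartbeats 1000000 in
lemma homProd_finsum_right {α : Type} (x : C ⊗[ℂ] (V2 →ₗ[ℂ] V3))
    {f : α → C ⊗[ℂ] (V1 →ₗ[ℂ] V2)} (hf : (Function.support f).Finite) :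
    homProd x (∑ᶠ i, f i) = ∑ᶠ i, homProd x (f i) :=
  (AddMonoidHom.mk' (fun w => homProd x w) (fun a b => homProd_add_right x a b)).map_finsum hf

end Helpers

set_option maxHeartbeats 2000000 in
open PartialBialgebra in
/-- **generalized inverse.** Let `(V,𝒳)` be a corepresentation of a
partial Hopf algebra `𝒜` with antipode `S`, and set `Z(k,l;m,n) := (S⊗id)(X(n,m;l,k))`.
Then `Z(k,l;m,n) ∈ A(k,l;m,n) ⊗ Hom(V(l,k),V(n,m))`, and (computing inside
`A ⊗ End(⊕V)`): `X(k,l;m,n)Z(l,k';n,m') = 0` for `m' ≠ m`;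
`Σ_n X(k,l;m,n)Z(l,k';n,m) = δ_{k,k'} 1(k,m) ⊗ id_{V(k,l)}`;
`Z(n,m;l,k)X(m,n';k,l') = 0` for `n ≠ n'`;
`Σ_m Z(n,m;l,k)X(m,n;k,l') = δ_{l,l'} 1(n,l) ⊗ id_{V(k,l)}`.
In particular `Z` is a generalized inverse of `X`: `XZX = X` and `ZXZ = Z`
(stated blockwise), the identities `XZ = Σ_k λ_k ⊗ λ^V_k` and `ZX = Σ_l ρ_l ⊗ ρ^V_l`
being the blockwise sum formulas above. -/
theorem generalized_inverse_of_corep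
    {I C : Type} [NonUnitalRing C] [Module ℂ C] [SMulCommClass ℂ C C] [IsScalarTower ℂ C C]
    (B : PartialBialgebra I C) (S : C →ₗ[ℂ] C) (hS : B.IsAntipode S)
    (V : I → I → Type)
    [∀ k l, AddCommGroup (V k l)] [∀ k l, Module ℂ (V k l)]
    [∀ k l, FiniteDimensional ℂ (V k l)]
    (hV : Rcfd V) (𝒳 : Corep B V) :
    (∀ k l m n, 𝒳.inv S k l m n ∈ LinearMap.range
      (LinearMap.rTensor (V l k →ₗ[ℂ] V n m) (B.comp k l m n).subtype)) ∧
    (∀ k l m n k' m', m' ≠ m →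
      homProd (𝒳.XT k l m n) (𝒳.ZT S l k' n m') = 0) ∧
    (∀ k l m k', (∑ᶠ n, homProd (𝒳.XT k l m n) (𝒳.ZT S l k' n m))
      = if k = k' then (B.E k m) ⊗ₜ[ℂ] (inclHom V k l k l LinearMap.id) else 0) ∧
    (∀ n m l k n' l', n ≠ n' →
      homProd (𝒳.ZT S n m l k) (𝒳.XT m n' k l') = 0) ∧
    (∀ n l k l', (∑ᶠ m, homProd (𝒳.ZT S n m l k) (𝒳.XT m n k l'))
      = if l = l' then (B.E n l) ⊗ₜ[ℂ] (inclHom V k l k l LinearMap.id) else 0) ∧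
    (∀ k l k' m n, (∑ᶠ p, ∑ᶠ q,
        homProd (homProd (𝒳.XT k l p q) (𝒳.ZT S l k' q p)) (𝒳.XT k' l m n))
      = if k = k' then 𝒳.XT k l m n else 0) ∧
    (∀ n m₀ l k₀, (∑ᶠ m, ∑ᶠ d,
        homProd (homProd (𝒳.ZT S n m l k₀) (𝒳.XT m n k₀ d)) (𝒳.ZT S n m₀ d k₀))
      = 𝒳.ZT S n m₀ l k₀) := by
  refine ⟨fun k l m n => inv_mem hS 𝒳 k l m n, ?_, ?_, ?_, ?_, ?_, ?_⟩
  · -- XZ = 0 off-diagonal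
    intro k l m n k' m' hm'
    unfold PartialBialgebra.Corep.XT PartialBialgebra.Corep.ZT
    exact homProd_lTensor_ne (fun hc => hm' ((Prod.ext_iff.mp hc).1.symm)) k l k' l
      (𝒳.X k l m n) (𝒳.inv S l k' n m')
  · -- XZ diagonal sums
    intro k l m k'
    have hterm : ∀ n, homProd (𝒳.XT k l m n) (𝒳.ZT S l k' n m)
        = LinearMap.lTensor C (inclHom V k l k' l)
            (homProd (𝒳.X k l m n)
              (LinearMap.rTensor (V k' l →ₗ[ℂ] V m n) S (𝒳.X m n k' l))) := fun n => by
      unfold PartialBialgebra.Corep.XT PartialBialgebra.Corep.ZT PartialBialgebra.Corep.inv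
      rw [homProd_lTensor_eq]
    simp only [hterm]
    have hfin : (Function.support fun n =>
        homProd (𝒳.X k l m n)
          (LinearMap.rTensor (V k' l →ₗ[ℂ] V m n) S (𝒳.X m n k' l))).Finite :=
      (hV.1 m).subset (fun n hn => by
        simp only [Function.mem_support] at hn
        by_contra hc
        exact hn (by rw [X_zero_of_dom 𝒳 hc, homProd_zero_left]))
    have hpull : (∑ᶠ n, (LinearMap.lTensor C (inclHom V k l k' l))
        (homProd (𝒳.X k l m n) (LinearMap.rTensor (V k' l →ₗ[ℂ] V m n) S (𝒳.X m n k' l))))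
        = (LinearMap.lTensor C (inclHom V k l k' l)) (∑ᶠ n, homProd (𝒳.X k l m n)
            (LinearMap.rTensor (V k' l →ₗ[ℂ] V m n) S (𝒳.X m n k' l))) :=
      ((AddMonoidHom.mk' (fun w => (LinearMap.lTensor C (inclHom V k l k' l)) w)
        (fun a b => LinearMap.map_add _ a b)).map_finsum hfin).symm
    rw [hpull]
    rcases eq_or_ne k k' with rfl | h
    · rw [star1_eq hS 𝒳 k l m, LinearMap.lTensor_tmul, if_pos rfl]
    · rw [star1_ne hS 𝒳 h l m, map_zero, if_neg h]
  · -- ZX = 0 off-diagonal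
    intro n m l k n' l' hn
    unfold PartialBialgebra.Corep.XT PartialBialgebra.Corep.ZT
    exact homProd_lTensor_ne (fun hc => hn ((Prod.ext_iff.mp hc).2)) k l k l'
      (𝒳.inv S n m l k) (𝒳.X m n' k l')
  · -- ZX diagonal sums
    intro n l k l'
    have hterm : ∀ m, homProd (𝒳.ZT S n m l k) (𝒳.XT m n k l')
        = LinearMap.lTensor C (inclHom V k l k l')
            (homProd (LinearMap.rTensor (V m n →ₗ[ℂ] V k l) S (𝒳.X k l m n))
              (𝒳.X m n k l')) := fun m => by
      unfold PartialBialgebra.Corep.XT PartialBialgebra.Corep.ZT PartialBialgebra.Corep.inv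
      rw [homProd_lTensor_eq]
    simp only [hterm]
    have hfin : (Function.support fun m =>
        homProd (LinearMap.rTensor (V m n →ₗ[ℂ] V k l) S (𝒳.X k l m n))
          (𝒳.X m n k l')).Finite :=
      (hV.2 n).subset (fun m hm => by
        simp only [Function.mem_support] at hm
        by_contra hc
        exact hm (by rw [X_zero_of_dom 𝒳 hc, map_zero, homProd_zero_left]))
    have hpull : (∑ᶠ m, (LinearMap.lTensor C (inclHom V k l k l'))
        (homProd (LinearMap.rTensor (V m n →ₗ[ℂ] V k l) S (𝒳.X k l m n)) (𝒳.X m n k l')))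
        = (LinearMap.lTensor C (inclHom V k l k l')) (∑ᶠ m, homProd
            (LinearMap.rTensor (V m n →ₗ[ℂ] V k l) S (𝒳.X k l m n)) (𝒳.X m n k l')) :=
      ((AddMonoidHom.mk' (fun w => (LinearMap.lTensor C (inclHom V k l k l')) w)
        (fun a b => LinearMap.map_add _ a b)).map_finsum hfin).symm
    rw [hpull]
    rcases eq_or_ne l l' with rfl | h
    · rw [star2_eq hS 𝒳 k l n, LinearMap.lTensor_tmul, if_pos rfl]
    · rw [star2_ne hS 𝒳 h k n, map_zero, if_neg h]
  · -- XZX = X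
    intro k l k' m n
    have hterm : ∀ p q, homProd (homProd (𝒳.XT k l p q) (𝒳.ZT S l k' q p)) (𝒳.XT k' l m n)
        = LinearMap.lTensor C (inclHom V k l m n)
            (homProd (homProd (𝒳.X k l p q)
                (LinearMap.rTensor (V k' l →ₗ[ℂ] V p q) S (𝒳.X p q k' l)))
              (𝒳.X k' l m n)) := fun p q => by
      unfold PartialBialgebra.Corep.XT PartialBialgebra.Corep.ZT PartialBialgebra.Corep.inv
      rw [homProd_lTensor_eq, homProd_lTensor_eq]
    simp only [hterm]
    have hout : ∀ p, (∑ᶠ q, LinearMap.lTensor C (inclHom V k l m n)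
        (homProd (homProd (𝒳.X k l p q)
            (LinearMap.rTensor (V k' l →ₗ[ℂ] V p q) S (𝒳.X p q k' l)))
          (𝒳.X k' l m n)))
        = LinearMap.lTensor C (inclHom V k l m n)
            (homProd (∑ᶠ q, homProd (𝒳.X k l p q)
                (LinearMap.rTensor (V k' l →ₗ[ℂ] V p q) S (𝒳.X p q k' l)))
              (𝒳.X k' l m n)) := fun p => by
      have hfinA : (Function.support fun q =>
          homProd (𝒳.X k l p q)
            (LinearMap.rTensor (V k' l →ₗ[ℂ] V p q) S (𝒳.X p q k' l))).Finite :=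
        (hV.1 p).subset (fun q hq => by
          simp only [Function.mem_support] at hq
          by_contra hc
          exact hq (by rw [X_zero_of_dom 𝒳 hc, homProd_zero_left]))
      have hfinB : (Function.support fun q =>
          homProd (homProd (𝒳.X k l p q)
              (LinearMap.rTensor (V k' l →ₗ[ℂ] V p q) S (𝒳.X p q k' l)))
            (𝒳.X k' l m n)).Finite :=
        hfinA.subset (fun q hq => by
          simp only [Function.mem_support] at hq ⊢
          by_contra hc
          exact hq (by rw [hc, homProd_zero_left]))
      rw [homProd_finsum_left _ hfinA]
      exact ((AddMonoidHom.mk' (fun w => (LinearMap.lTensor C (inclHom V k l m n)) w)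
        (fun a b => LinearMap.map_add _ a b)).map_finsum hfinB).symm
    simp only [hout]
    rcases eq_or_ne k k' with rfl | h
    · have hA : ∀ p, (∑ᶠ q, homProd (𝒳.X k l p q)
          (LinearMap.rTensor (V k l →ₗ[ℂ] V p q) S (𝒳.X p q k l)))
          = (B.E k p) ⊗ₜ[ℂ] (LinearMap.id : V k l →ₗ[ℂ] V k l) := fun p =>
        star1_eq hS 𝒳 k l p
      simp only [hA]
      have hE : ∀ p, homProd ((B.E k p) ⊗ₜ[ℂ] (LinearMap.id : V k l →ₗ[ℂ] V k l))
          (𝒳.X k l m n) = if (k, p) = (k, m) then 𝒳.X k l m n else 0 := fun p =>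
        homProd_E_id_left k p (𝒳.X_mem k l m n)
      simp only [hE]
      rw [finsum_eq_single _ m (fun p hp => by
        rw [if_neg (fun hc => hp (Prod.ext_iff.mp hc).2), map_zero]),
        if_pos (rfl : (k, m) = (k, m))]
      simp only [eq_self_iff_true, if_true]
      rfl
    · have hA : ∀ p, (∑ᶠ q, homProd (𝒳.X k l p q)
          (LinearMap.rTensor (V k' l →ₗ[ℂ] V p q) S (𝒳.X p q k' l))) = 0 := fun p =>
        star1_ne hS 𝒳 h l p
      simp only [hA, homProd_zero_left, map_zero, finsum_zero]
      rw [if_neg h]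
  · -- ZXZ = Z
    intro n m₀ l k₀
    have hterm : ∀ m d, homProd (homProd (𝒳.ZT S n m l k₀) (𝒳.XT m n k₀ d)) (𝒳.ZT S n m₀ d k₀)
        = LinearMap.lTensor C (inclHom V k₀ l m₀ n)
            (homProd (LinearMap.rTensor (V m n →ₗ[ℂ] V k₀ l) S (𝒳.X k₀ l m n))
              (homProd (𝒳.X m n k₀ d)
                (LinearMap.rTensor (V m₀ n →ₗ[ℂ] V k₀ d) S (𝒳.X k₀ d m₀ n)))) := fun m d => by
      unfold PartialBialgebra.Corep.XT PartialBialgebra.Corep.ZT PartialBialgebra.Corep.inv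
      rw [homProd_lTensor_eq, homProd_lTensor_eq, homProd_assoc]
    simp only [hterm]
    have hout : ∀ m, (∑ᶠ d, LinearMap.lTensor C (inclHom V k₀ l m₀ n)
        (homProd (LinearMap.rTensor (V m n →ₗ[ℂ] V k₀ l) S (𝒳.X k₀ l m n))
          (homProd (𝒳.X m n k₀ d)
            (LinearMap.rTensor (V m₀ n →ₗ[ℂ] V k₀ d) S (𝒳.X k₀ d m₀ n)))))
        = LinearMap.lTensor C (inclHom V k₀ l m₀ n)
            (homProd (LinearMap.rTensor (V m n →ₗ[ℂ] V k₀ l) S (𝒳.X k₀ l m n))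
              (∑ᶠ d, homProd (𝒳.X m n k₀ d)
                (LinearMap.rTensor (V m₀ n →ₗ[ℂ] V k₀ d) S (𝒳.X k₀ d m₀ n)))) := fun m => by
      have hfinA : (Function.support fun d =>
          homProd (𝒳.X m n k₀ d)
            (LinearMap.rTensor (V m₀ n →ₗ[ℂ] V k₀ d) S (𝒳.X k₀ d m₀ n))).Finite :=
        (hV.1 k₀).subset (fun d hd => by
          simp only [Function.mem_support] at hd
          by_contra hc
          exact hd (by rw [X_zero_of_dom 𝒳 hc, homProd_zero_left]))
      have hfinB : (Function.support fun d =>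
          homProd (LinearMap.rTensor (V m n →ₗ[ℂ] V k₀ l) S (𝒳.X k₀ l m n))
            (homProd (𝒳.X m n k₀ d)
              (LinearMap.rTensor (V m₀ n →ₗ[ℂ] V k₀ d) S (𝒳.X k₀ d m₀ n)))).Finite :=
        hfinA.subset (fun d hd => by
          simp only [Function.mem_support] at hd ⊢
          by_contra hc
          exact hd (by rw [hc, homProd_zero_right]))
      rw [homProd_finsum_right _ hfinA]
      exact ((AddMonoidHom.mk' (fun w => (LinearMap.lTensor C (inclHom V k₀ l m₀ n)) w)
        (fun a b => LinearMap.map_add _ a b)).map_finsum hfinB).symm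
    simp only [hout]
    rw [finsum_eq_single _ m₀ (fun m hm => by
      rw [star1_ne hS 𝒳 hm n k₀, homProd_zero_right, map_zero])]
    rw [star1_eq hS 𝒳 m₀ n k₀]
    have hw := inv_mem hS 𝒳 n m₀ l k₀
    unfold PartialBialgebra.Corep.inv at hw
    rw [homProd_E_id_right m₀ k₀ hw, if_pos rfl]
    rfl
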